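/- arXiv:2504.04165 — 2 statements merged into one kernel-verified Lean document; each statement's English description precedes it below -/
import Mathlib

section
/- Let U ⊆ ℝ³ be open, let B : U → ℝ³ be twice continuously differentiable with B(y) ≠ 0 for all y ∈ U, set b(y) := B(y)/|B(y)|, and let p : U → ℝ be differentiable with ∇p = B × curl(B) on U. Then for all y ∈ U: (b(y) × ∇p(y)) · (Db(y)·b(y)) = (∇p(y) × B(y)) · ∇(|B|⁻¹)(y), where Db denotes the Jacobian matrix of b and ∇(|B|⁻¹) the gradient of y ↦ 1/|B(y)|. -/
noncomputable section

open Real Filter Topology MeasureTheory intervalIntegral Bornology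

abbrev E3 : Type := EuclideanSpace ℝ (Fin 3)

def cross3 (u v : E3) : E3 :=
  (WithLp.equiv 2 (Fin 3 → ℝ)).symm
    ![u 1 * v 2 - u 2 * v 1, u 2 * v 0 - u 0 * v 2, u 0 * v 1 - u 1 * v 0]

def divg (F : E3 → E3) (y : E3) : ℝ :=
  ∑ i : Fin 3, fderiv ℝ F y (EuclideanSpace.single i (1:ℝ)) i

def curl3 (F : E3 → E3) (y : E3) : E3 :=
  (WithLp.equiv 2 (Fin 3 → ℝ)).symm
    ![fderiv ℝ F y (EuclideanSpace.single 1 (1:ℝ)) 2 - fderiv ℝ F y (EuclideanSpace.single 2 (1:ℝ)) 1,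
      fderiv ℝ F y (EuclideanSpace.single 2 (1:ℝ)) 0 - fderiv ℝ F y (EuclideanSpace.single 0 (1:ℝ)) 2,
      fderiv ℝ F y (EuclideanSpace.single 0 (1:ℝ)) 1 - fderiv ℝ F y (EuclideanSpace.single 1 (1:ℝ)) 0]

def bdir (B : E3 → E3) (y : E3) : E3 := ‖B y‖⁻¹ • B y

def IsLorentzSol (B : E3 → E3) (ω : ℝ) (x₀ v₀ : E3) (x : ℝ → E3) : Prop :=
  x 0 = x₀ ∧ deriv x 0 = v₀ ∧ Differentiable ℝ x ∧
    ∀ t : ℝ, HasDerivAt (deriv x) (ω • cross3 (deriv x t) (B (x t))) t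

def IsLimitSol (B : E3 → E3) (x₀ v₀ : E3) (x : ℝ → E3) (h : ℝ → ℝ) : Prop :=
  x 0 = x₀ ∧ h 0 = (inner ℝ v₀ (bdir B x₀) : ℝ) ∧
    (∀ t : ℝ, HasDerivAt x (h t • bdir B (x t)) t) ∧
    (∀ t : ℝ, HasDerivAt h ((‖v₀‖ ^ 2 - h t ^ 2) / 2 * divg (bdir B) (x t)) t)

def IsCkBounded (k : ℕ) (B : E3 → E3) : Prop :=
  ContDiff ℝ k B ∧ ∀ i ≤ k, ∃ M : ℝ, ∀ y : E3, ‖iteratedFDeriv ℝ i B y‖ ≤ M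

def MinimalGrowth (γ : ℝ) (B : E3 → E3) : Prop :=
  ∃ R C : ℝ, 0 < R ∧ 0 < C ∧ ∀ y : E3, R ≤ ‖y‖ → C / ‖y‖ ^ γ ≤ ‖B y‖

set_option maxHeartbeats 1600000 in
lemma e3_decomp (v : E3) : v = v 0 • EuclideanSpace.single 0 (1:ℝ)
    + v 1 • EuclideanSpace.single 1 (1:ℝ) + v 2 • EuclideanSpace.single 2 (1:ℝ) := by
  ext i; fin_cases i <;> simp [EuclideanSpace.single_apply]

set_option maxHeartbeats 1600000 in
theorem equilibrium_curvature_identity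
    (U : Set E3) (hU : IsOpen U) (B : E3 → E3) (hB : ContDiffOn ℝ 2 B U)
    (hB0 : ∀ y ∈ U, B y ≠ 0) (p : E3 → ℝ) (hp : DifferentiableOn ℝ p U)
    (hmhd : ∀ y ∈ U, gradient p y = cross3 (B y) (curl3 B y)) :
    ∀ y ∈ U,
      (inner ℝ (cross3 (bdir B y) (gradient p y)) (fderiv ℝ (bdir B) y (bdir B y)) : ℝ)
        = (inner ℝ (cross3 (gradient p y) (B y)) (gradient (fun z : E3 => ‖B z‖⁻¹) y) : ℝ) := by
  intro y hy
  have hBy : B y ≠ 0 := hB0 y hy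
  have hnB : ‖B y‖ ≠ 0 := norm_ne_zero_iff.2 hBy
  have hBd : DifferentiableAt ℝ B y :=
    (hB.contDiffAt (hU.mem_nhds hy)).differentiableAt (by norm_num)
  set J := fderiv ℝ B y with hJdef
  have hJ : HasFDerivAt B J y := hBd.hasFDerivAt
  have hq :      HasFDerivAt (fun z => ‖B z‖⁻¹)
      (-((‖B y‖ ^ 2)⁻¹ • (‖B y‖⁻¹ * 2⁻¹) • (fderivInnerCLM ℝ (B y, B y)).comp (J.prod J))) y := by
    have hs : HasFDerivAt (fun z => (inner ℝ (B z) (B z) : ℝ))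
        ((fderivInnerCLM ℝ (B y, B y)).comp (J.prod J)) y := hJ.inner ℝ hJ
    have hsne : (inner ℝ (B y) (B y) : ℝ) ≠ 0 := by
      rw [real_inner_self_eq_norm_sq]; exact pow_ne_zero 2 hnB
    have hnorm := hs.sqrt hsne
    rw [show Real.sqrt (inner ℝ (B y) (B y) : ℝ) = ‖B y‖ from (norm_eq_sqrt_real_inner (B y)).symm]
      at hnorm
    have hnorm' : HasFDerivAt (fun z => ‖B z‖)
        ((1 / (2 * ‖B y‖)) • ((fderivInnerCLM ℝ (B y, B y)).comp (J.prod J))) y := by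
      have : (fun z => Real.sqrt (inner ℝ (B z) (B z) : ℝ)) = fun z => ‖B z‖ := by
        funext z; rw [← norm_eq_sqrt_real_inner]
      rwa [this] at hnorm
    simpa [Function.comp_def] using (hasDerivAt_inv hnB).comp_hasFDerivAt y hnorm'
  have hbd : HasFDerivAt (bdir B) (‖B y‖⁻¹ • J +
      ContinuousLinearMap.smulRight
        (-((‖B y‖ ^ 2)⁻¹ • (‖B y‖⁻¹ * 2⁻¹) • (fderivInnerCLM ℝ (B y, B y)).comp (J.prod J)))
        (B y)) y := hq.smul hJ
  -- rewrite the goal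
  rw [hbd.fderiv, hmhd y hy]
  rw [real_inner_comm (gradient (fun z : E3 => ‖B z‖⁻¹) y) (cross3 (cross3 (B y) (curl3 B y)) (B y))]
  rw [show gradient (fun z : E3 => ‖B z‖⁻¹) y = (InnerProductSpace.toDual ℝ E3).symm
    (fderiv ℝ (fun z : E3 => ‖B z‖⁻¹) y) from rfl, hq.fderiv,
    InnerProductSpace.toDual_symm_apply]
  -- matrix entries
  set m : Fin 3 → Fin 3 → ℝ := fun i j => J (EuclideanSpace.single i (1:ℝ)) j with hmdef
  have hJv : ∀ (v : E3) (j : Fin 3), J v j = v 0 * m 0 j + v 1 * m 1 j + v 2 * m 2 j := by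
    intro v j
    conv_lhs => rw [e3_decomp v]
    simp [hmdef]
  simp only [curl3, bdir, cross3, ContinuousLinearMap.add_apply,
    ContinuousLinearMap.coe_smul', Pi.smul_apply, ContinuousLinearMap.smulRight_apply,
    ContinuousLinearMap.comp_apply, ContinuousLinearMap.prod_apply, fderivInnerCLM_apply,
    _root_.map_smul, PiLp.inner_apply, RCLike.inner_apply, conj_trivial, Fin.sum_univ_three,
    WithLp.equiv_symm_apply, PiLp.toLp_apply, PiLp.smul_apply, PiLp.add_apply, smul_eq_mul,
    Matrix.cons_val_zero, Matrix.cons_val_one, Matrix.head_cons, Matrix.cons_val_two,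
    Matrix.tail_cons, ContinuousLinearMap.neg_apply, hJv, EuclideanSpace.single_apply]
  norm_num [Fin.ext_iff]
  ring
end
end

section
/- Let B : ℝ³ → ℝ³ be continuously differentiable with B(y) ≠ 0 for all y ∈ ℝ³, and let p : ℝ³ → ℝ be twice continuously differentiable with ∇p(y)·B(y) = 0 for all y. Fix x₀, v₀ ∈ ℝ³ and ω > 0. Then for all t ≥ 0 the exact identity holds: p(x_ω(t)) − p(x₀) = (1/ω)[ ∇p(x_ω(t))·(b(x_ω(t)) × v_ω(t)) / |B(x_ω(t))| − ∇p(x₀)·(b(x₀) × v₀) / |B(x₀)| ] − (1/ω) ∫₀ᵗ v_ω(s) · (d/ds)[ (∇p(x_ω(s)) × b(x_ω(s))) / |B(x_ω(s))| ] ds. -/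
noncomputable section

open Real Filter Topology MeasureTheory intervalIntegral Bornology

lemma cross3_apply (u v : E3) (i : Fin 3) : cross3 u v i =
    ![u 1 * v 2 - u 2 * v 1, u 2 * v 0 - u 0 * v 2, u 0 * v 1 - u 1 * v 0] i := by
  simp [cross3]

lemma key1 (a b c d : E3) : (inner ℝ (cross3 a b) (cross3 c d) : ℝ)
    = (inner ℝ a c : ℝ) * (inner ℝ b d : ℝ) - (inner ℝ a d : ℝ) * (inner ℝ b c : ℝ) := by
  simp [cross3_apply, PiLp.inner_apply, RCLike.inner_apply, Fin.sum_univ_three]; ring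

lemma triple (a b c : E3) : (inner ℝ (cross3 a b) c : ℝ) = (inner ℝ a (cross3 b c) : ℝ) := by
  simp [cross3_apply, PiLp.inner_apply, RCLike.inner_apply, Fin.sum_univ_three]; ring

lemma cross3_smul_right (r : ℝ) (a b : E3) : cross3 a (r • b) = r • cross3 a b := by
  ext i; fin_cases i <;> simp [cross3_apply] <;> ring

lemma cross3_contDiff {n : WithTop ℕ∞} : ContDiff ℝ n (fun q : E3 × E3 => cross3 q.1 q.2) := by
  have h1 : ∀ i : Fin 3, ContDiff ℝ n (fun q : E3 × E3 => q.1 i) := fun i =>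
    (EuclideanSpace.proj i : E3 →L[ℝ] ℝ).contDiff.comp contDiff_fst
  have h2 : ∀ i : Fin 3, ContDiff ℝ n (fun q : E3 × E3 => q.2 i) := fun i =>
    (EuclideanSpace.proj i : E3 →L[ℝ] ℝ).contDiff.comp contDiff_snd
  rw [show (fun q : E3 × E3 => cross3 q.1 q.2) = fun q : E3 × E3 =>
    (WithLp.equiv 2 (Fin 3 → ℝ)).symm ![q.1 1 * q.2 2 - q.1 2 * q.2 1,
      q.1 2 * q.2 0 - q.1 0 * q.2 2, q.1 0 * q.2 1 - q.1 1 * q.2 0] from rfl]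
  apply contDiff_euclidean.2
  intro i
  fin_cases i <;> simp <;>
    exact (((h1 _).mul (h2 _)).sub ((h1 _).mul (h2 _)))

lemma key_alg (g Bv w : E3) (h0 : (inner ℝ g Bv : ℝ) = 0) (hB : Bv ≠ 0) (ω : ℝ) :
    (inner ℝ (‖Bv‖⁻¹ • cross3 g (‖Bv‖⁻¹ • Bv)) (ω • cross3 w Bv) : ℝ)
      = ω * (inner ℝ g w : ℝ) := by
  have hn : ‖Bv‖ ≠ 0 := norm_ne_zero_iff.2 hB
  rw [cross3_smul_right, real_inner_smul_left, real_inner_smul_left, real_inner_smul_right,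
    key1, h0, real_inner_self_eq_norm_sq]
  field_simp
  ring

theorem pressure_integration_by_parts_identity
    (B : E3 → E3) (hB : ContDiff ℝ 1 B) (hB0 : ∀ y : E3, B y ≠ 0)
    (p : E3 → ℝ) (hp : ContDiff ℝ 2 p)
    (horth : ∀ y : E3, (inner ℝ (gradient p y) (B y) : ℝ) = 0)
    (x₀ v₀ : E3) (ω : ℝ) (hω : 0 < ω) (xω : ℝ → E3)
    (hxω : IsLorentzSol B ω x₀ v₀ xω) :
    ∀ t ≥ (0:ℝ),
      p (xω t) - p x₀
        = (1 / ω) * ((inner ℝ (gradient p (xω t)) (cross3 (bdir B (xω t)) (deriv xω t)) : ℝ)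
              / ‖B (xω t)‖
            - (inner ℝ (gradient p x₀) (cross3 (bdir B x₀) v₀) : ℝ) / ‖B x₀‖)
          - (1 / ω) * ∫ s in (0:ℝ)..t,
              (inner ℝ (deriv xω s)
                (deriv (fun σ : ℝ =>
                  ‖B (xω σ)‖⁻¹ • cross3 (gradient p (xω σ)) (bdir B (xω σ))) s) : ℝ) := by
  obtain ⟨hx0, hv0, hxd, hvd⟩ := hxω
  intro t ht
  set v : ℝ → E3 := deriv xω with hv
  set U : E3 → E3 := fun y => ‖B y‖⁻¹ • cross3 (gradient p y) (bdir B y) with hUdef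
  set u : ℝ → E3 := fun σ : ℝ => ‖B (xω σ)‖⁻¹ • cross3 (gradient p (xω σ)) (bdir B (xω σ)) with hudef
  have huU : u = fun σ => U (xω σ) := rfl
  -- regularity of U
  have hgrad : ContDiff ℝ 1 (gradient p) := by
    have h1 : ContDiff ℝ 1 (fderiv ℝ p) := hp.fderiv_right (by norm_num)
    exact ((InnerProductSpace.toDual ℝ E3).symm.contDiff).comp h1
  have hninv : ∀ y : E3, ContDiffAt ℝ 1 (fun z => ‖B z‖⁻¹) y := by
    intro y
    exact ((contDiffAt_norm ℝ (hB0 y)).comp y hB.contDiffAt).inv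
      (norm_ne_zero_iff.2 (hB0 y))
  have hbdirC : ∀ y : E3, ContDiffAt ℝ 1 (bdir B) y := fun y =>
    (hninv y).smul hB.contDiffAt
  have hU : ContDiff ℝ 1 U := by
    rw [contDiff_iff_contDiffAt]
    intro y
    exact (hninv y).smul
      ((cross3_contDiff (n := 1)).contDiffAt.comp y ((hgrad.contDiffAt).prodMk (hbdirC y)))
  -- time regularity
  have hderiv_x : ∀ s : ℝ, HasDerivAt xω (v s) s := fun s => (hxd s).hasDerivAt
  have hvdiff : Differentiable ℝ v := fun s => (hvd s).differentiableAt
  have hvC : Continuous v := hvdiff.continuous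
  have hu_hd : ∀ s : ℝ, HasDerivAt u (fderiv ℝ U (xω s) (v s)) s := by
    intro s
    rw [huU]
    exact ((hU.differentiable one_ne_zero (xω s)).hasFDerivAt).comp_hasDerivAt s (hderiv_x s)
  have hu' : ∀ s : ℝ, deriv u s = fderiv ℝ U (xω s) (v s) := fun s => (hu_hd s).deriv
  have hfC : Continuous fun s => (inner ℝ (v s) (deriv u s) : ℝ) := by
    have h1 : Continuous fun s => fderiv ℝ U (xω s) :=
      (hU.continuous_fderiv one_ne_zero).comp hxd.continuous
    have h2 : Continuous fun s => deriv u s := by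
      simp only [hu']
      exact h1.clm_apply hvC
    exact hvC.inner h2
  -- derivative of p ∘ xω
  have hpx : ∀ s : ℝ, HasDerivAt (fun τ => p (xω τ)) ((inner ℝ (gradient p (xω s)) (v s) : ℝ)) s := by
    intro s
    have h1 := ((hp.differentiable two_ne_zero (xω s)).hasGradientAt.hasFDerivAt).comp_hasDerivAt
      s (hderiv_x s)
    simpa [Function.comp, InnerProductSpace.toDual_apply_apply] using (show HasDerivAt (fun τ => p (xω τ)) _ s from h1)
  -- derivative of F
  have hF : ∀ s : ℝ, HasDerivAt (fun τ => p (xω τ) - (1/ω) * (inner ℝ (u τ) (v τ) : ℝ))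
      (-(1/ω) * (inner ℝ (v s) (deriv u s) : ℝ)) s := by
    intro s
    have h2 : HasDerivAt (fun τ => (inner ℝ (u τ) (v τ) : ℝ))
        ((inner ℝ (u s) (ω • cross3 (v s) (B (xω s))) : ℝ)
          + (inner ℝ (fderiv ℝ U (xω s) (v s)) (v s) : ℝ)) s :=
      HasDerivAt.inner ℝ (hu_hd s) (hvd s)
    have h3 : (inner ℝ (u s) (ω • cross3 (v s) (B (xω s))) : ℝ)
        = ω * (inner ℝ (gradient p (xω s)) (v s) : ℝ) := by
      simp only [hudef, bdir]
      exact key_alg _ _ _ (horth (xω s)) (hB0 (xω s)) ω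
    have h4 := (hpx s).sub (h2.const_mul (1/ω))
    convert h4 using 1
    case e'_4 => rfl
    case e'_5 => rfl
    case e'_8 => rfl
    rw [h3, ← hu' s, real_inner_comm]
    field_simp
    ring
  -- FTC
  have hInt : IntervalIntegrable (fun s => -(1/ω) * (inner ℝ (v s) (deriv u s) : ℝ))
      MeasureTheory.volume 0 t :=
    (continuous_const.mul hfC).intervalIntegrable 0 t
  have hFTC := intervalIntegral.integral_eq_sub_of_hasDerivAt (fun s _ => hF s) hInt
  rw [intervalIntegral.integral_const_mul] at hFTC
  -- boundary terms
  have hbnd : ∀ s : ℝ, (inner ℝ (u s) (v s) : ℝ)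
      = (inner ℝ (gradient p (xω s)) (cross3 (bdir B (xω s)) (v s)) : ℝ) / ‖B (xω s)‖ := by
    intro s
    simp only [hudef]
    rw [real_inner_smul_left, triple, inv_mul_eq_div]
  have hv00 : v 0 = v₀ := hv0
  rw [hbnd t, hbnd 0, hx0, hv00] at hFTC
  linear_combination -hFTC
end
end
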